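/- Let W be a DMC with finite input alphabet X containing the 'off' symbol 0 and finite output alphabet Y, with Q0 = W(·|0) having full support on Y. Let P̃ be an input distribution with P̃(0) = 0, let P0 be the point mass at 0, and for μ ∈ [0,1] set P_μ = (1−μ)P0 + μP̃. Then the right derivative at μ = 0 of μ ↦ I(P_μ, W) equals Σ_{x∈X} P̃(x) D( W(·|x) ‖ Q0 ); equivalently, I(P_μ, W) = μ · Σ_x P̃(x) D(W(·|x) ‖ Q0) + o(μ) as μ ↓ 0. -/

import Mathlib

/-!
STATEMENT 14: For a DMC `W` with full-support `Q0 = W(·|x0)`, an input distribution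
`P̃` with `P̃(x0) = 0`, and `P_μ = (1−μ)δ_{x0} + μP̃`, the right derivative of
`μ ↦ I(P_μ, W)` at `μ = 0` equals `Σ_x P̃(x) D(W(·|x) ‖ Q0)`; equivalently
`I(P_μ, W) = μ Σ_x P̃(x) D(W(·|x) ‖ Q0) + o(μ)` as `μ ↓ 0`.
-/

open Filter Asymptotics
open scoped BigOperators Topology

/-- `p` is a probability mass function on a finite type. -/
def IsDist {α : Type*} [Fintype α] (p : α → ℝ) : Prop :=
  (∀ a, 0 ≤ p a) ∧ ∑ a, p a = 1

/-- Relative entropy (in nats) between pmfs on a finite type. -/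
noncomputable def relEnt {α : Type*} [Fintype α] (p q : α → ℝ) : ℝ :=
  ∑ a, p a * Real.log (p a / q a)

/-- Output distribution on `Y` induced by input distribution `P` through channel `W`. -/
noncomputable def outDist {X Y : Type*} [Fintype X] (P : X → ℝ) (W : X → Y → ℝ) : Y → ℝ :=
  fun y => ∑ x, P x * W x y

/-- Mutual information `I(P, W)`. -/
noncomputable def mutInfo {X Y : Type*} [Fintype X] [Fintype Y] (P : X → ℝ) (W : X → Y → ℝ) : ℝ :=
  ∑ x, ∑ y, P x * W x y * Real.log (W x y / outDist P W y)

theorem statement14 {X Y : Type*} [Fintype X] [Fintype Y] [DecidableEq X]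
    (W : X → Y → ℝ) (x0 : X) (hW : ∀ x, IsDist (W x)) (hsupp : ∀ y, 0 < W x0 y)
    (Pt : X → ℝ) (hPt : IsDist Pt) (hPt0 : Pt x0 = 0) :
    HasDerivWithinAt
      (fun μ : ℝ => mutInfo (fun x => (1 - μ) * (if x = x0 then 1 else 0) + μ * Pt x) W)
      (∑ x, Pt x * relEnt (W x) (W x0)) (Set.Ici 0) 0 ∧
    (fun μ : ℝ => mutInfo (fun x => (1 - μ) * (if x = x0 then 1 else 0) + μ * Pt x) W -
        μ * ∑ x, Pt x * relEnt (W x) (W x0))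
      =o[nhdsWithin 0 (Set.Ioi 0)] fun μ : ℝ => μ := by
  classical
  have hQ : ∀ y, W x0 y ≠ 0 := fun y => (hsupp y).ne'
  have hsumT : ∑ y, ∑ x, Pt x * W x y = 1 := by
    rw [Finset.sum_comm]
    simp_rw [← Finset.mul_sum]
    calc ∑ x, Pt x * ∑ y, W x y = ∑ x, Pt x * 1 :=
          Finset.sum_congr rfl fun x _ => by rw [(hW x).2]
      _ = 1 := by simpa using hPt.2
  -- rewrite the output distribution as an affine function of μ
  have outEq : ∀ (μ : ℝ) (y : Y),
      outDist (fun x => (1 - μ) * (if x = x0 then 1 else 0) + μ * Pt x) W y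
        = W x0 y + μ * ((∑ x', Pt x' * W x' y) - W x0 y) := by
    intro μ y
    simp only [outDist, add_mul, Finset.sum_add_distrib, mul_assoc, ← Finset.mul_sum,
      ite_mul, one_mul, zero_mul, Finset.sum_ite_eq', Finset.mem_univ, if_true]
    ring
  have hfun : (fun μ : ℝ => mutInfo (fun x => (1 - μ) * (if x = x0 then 1 else 0) + μ * Pt x) W)
      = fun μ : ℝ => ∑ x, ∑ y, ((1 - μ) * (if x = x0 then 1 else 0) + μ * Pt x) * W x y *
          Real.log (W x y / (W x0 y + μ * ((∑ x', Pt x' * W x' y) - W x0 y))) := by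
    funext μ
    simp only [mutInfo, outEq]
  -- derivative of each term
  have hterm : ∀ (x : X) (y : Y), HasDerivAt
      (fun μ : ℝ => ((1 - μ) * (if x = x0 then 1 else 0) + μ * Pt x) * W x y *
        Real.log (W x y / (W x0 y + μ * ((∑ x', Pt x' * W x' y) - W x0 y))))
      ((Pt x - (if x = x0 then 1 else 0)) * (W x y * Real.log (W x y / W x0 y))
        - (if x = x0 then 1 else 0) *
            (W x y * (((∑ x', Pt x' * W x' y) - W x0 y) / W x0 y))) 0 := by
    intro x y
    rcases eq_or_lt_of_le ((hW x).1 y) with hc | hc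
    · simp only [← hc, mul_zero, zero_mul, sub_zero]
      exact hasDerivAt_const 0 0
    · have ha := hsupp y
      set b : ℝ := (∑ x', Pt x' * W x' y) - W x0 y with hbdef
      have hg : HasDerivAt (fun μ : ℝ => W x0 y + μ * b) b 0 := by
        simpa using ((hasDerivAt_id (0 : ℝ)).mul_const b).const_add (W x0 y)
      have hg0 : W x0 y + (0 : ℝ) * b = W x0 y := by ring
      have hlog : HasDerivAt (fun μ : ℝ => Real.log (W x0 y + μ * b)) (b / W x0 y) 0 := by
        have := hg.log (by rw [hg0]; exact hQ y)
        simpa [hg0] using this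
      have hA : HasDerivAt (fun μ : ℝ => (1 - μ) * (if x = x0 then 1 else 0) + μ * Pt x)
          (Pt x - (if x = x0 then 1 else 0)) 0 := by
        have h12 := (((hasDerivAt_id' (x := (0 : ℝ))).const_sub 1).mul_const
            (if x = x0 then (1 : ℝ) else 0)).add
          ((hasDerivAt_id' (x := (0 : ℝ))).mul_const (Pt x))
        exact h12.congr_deriv (by ring)
      have h1 := hA.mul_const (W x y)
      have h2 := hlog.const_sub (Real.log (W x y))
      have hmul := h1.mul h2
      have hcont : Continuous (fun μ : ℝ => W x0 y + μ * b) := by continuity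
      have hopen : ∀ᶠ μ in 𝓝 (0 : ℝ), 0 < W x0 y + μ * b :=
        (isOpen_lt continuous_const hcont).mem_nhds (by rw [Set.mem_setOf_eq, hg0]; exact ha)
      have hEv : (fun μ : ℝ => ((1 - μ) * (if x = x0 then 1 else 0) + μ * Pt x) * W x y *
            Real.log (W x y / (W x0 y + μ * b)))
          =ᶠ[𝓝 (0 : ℝ)] fun μ : ℝ =>
            ((1 - μ) * (if x = x0 then 1 else 0) + μ * Pt x) * W x y *
              (Real.log (W x y) - Real.log (W x0 y + μ * b)) := by
        filter_upwards [hopen] with μ hμ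
        rw [Real.log_div hc.ne' hμ.ne']
      have hfinal := hmul.congr_of_eventuallyEq hEv
      refine hfinal.congr_deriv ?_
      rw [Real.log_div hc.ne' (hQ y), hg0]
      ring
  have hF : HasDerivAt
      (fun μ : ℝ => ∑ x, ∑ y, ((1 - μ) * (if x = x0 then 1 else 0) + μ * Pt x) * W x y *
        Real.log (W x y / (W x0 y + μ * ((∑ x', Pt x' * W x' y) - W x0 y))))
      (∑ x, ∑ y, ((Pt x - (if x = x0 then 1 else 0)) * (W x y * Real.log (W x y / W x0 y))
        - (if x = x0 then 1 else 0) *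
            (W x y * (((∑ x', Pt x' * W x' y) - W x0 y) / W x0 y)))) 0 :=
    HasDerivAt.fun_sum fun x _ => HasDerivAt.fun_sum fun y _ => hterm x y
  -- simplify the total derivative
  have hD : (∑ x, ∑ y, ((Pt x - (if x = x0 then 1 else 0)) * (W x y * Real.log (W x y / W x0 y))
        - (if x = x0 then 1 else 0) *
            (W x y * (((∑ x', Pt x' * W x' y) - W x0 y) / W x0 y))))
      = ∑ x, Pt x * relEnt (W x) (W x0) := by
    have step1 : ∀ x : X,
        (∑ y, ((Pt x - (if x = x0 then 1 else 0)) * (W x y * Real.log (W x y / W x0 y))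
          - (if x = x0 then 1 else 0) *
              (W x y * (((∑ x', Pt x' * W x' y) - W x0 y) / W x0 y))))
        = (Pt x - (if x = x0 then 1 else 0)) * relEnt (W x) (W x0)
          - (if x = x0 then 1 else 0) *
              ∑ y, W x y * (((∑ x', Pt x' * W x' y) - W x0 y) / W x0 y) := by
      intro x
      rw [Finset.sum_sub_distrib, ← Finset.mul_sum, ← Finset.mul_sum, relEnt]
    simp_rw [step1]
    rw [Finset.sum_sub_distrib]
    have e1 : (∑ x, (Pt x - (if x = x0 then 1 else 0)) * relEnt (W x) (W x0))
        = (∑ x, Pt x * relEnt (W x) (W x0)) - relEnt (W x0) (W x0) := by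
      simp_rw [sub_mul]
      rw [Finset.sum_sub_distrib]
      congr 1
      simp [ite_mul, one_mul, zero_mul, Finset.sum_ite_eq']
    have e2 : (∑ x, (if x = x0 then (1 : ℝ) else 0) *
          ∑ y, W x y * (((∑ x', Pt x' * W x' y) - W x0 y) / W x0 y))
        = ∑ y, W x0 y * (((∑ x', Pt x' * W x' y) - W x0 y) / W x0 y) := by
      simp [ite_mul, one_mul, zero_mul, Finset.sum_ite_eq']
    have hRQ : relEnt (W x0) (W x0) = 0 := by
      rw [relEnt]
      refine Finset.sum_eq_zero fun y _ => ?_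
      rw [div_self (hQ y), Real.log_one, mul_zero]
    have hS : (∑ y, W x0 y * (((∑ x', Pt x' * W x' y) - W x0 y) / W x0 y)) = 0 := by
      have heach : ∀ y : Y, W x0 y * (((∑ x', Pt x' * W x' y) - W x0 y) / W x0 y)
          = (∑ x', Pt x' * W x' y) - W x0 y := fun y => by
        field_simp
        exact mul_div_cancel_left₀ _ (hQ y)
      simp_rw [heach]
      rw [Finset.sum_sub_distrib, hsumT, (hW x0).2, sub_self]
    rw [e1, e2, hRQ, hS, sub_zero, sub_zero]
  rw [hD] at hF
  rw [← hfun] at hF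
  -- value at 0 is 0
  have h0 : mutInfo (fun x => (1 - (0 : ℝ)) * (if x = x0 then 1 else 0) + 0 * Pt x) W = 0 := by
    have := congrFun hfun 0
    rw [this]
    rw [Finset.sum_comm]
    refine Finset.sum_eq_zero fun y _ => ?_
    refine Finset.sum_eq_zero fun x _ => ?_
    by_cases hx : x = x0 <;> simp [hx, div_self (hQ y)]
  refine ⟨hF.hasDerivWithinAt, ?_⟩
  have hiso := hasDerivAt_iff_isLittleO.mp hF
  have hmono := hiso.mono (nhdsWithin_le_nhds (s := Set.Ioi (0 : ℝ)))
  have h0two : mutInfo (fun x => (1 : ℝ) * (if x = x0 then 1 else 0) + 0 * Pt x) W = 0 := by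
    have he : (fun x => (1 : ℝ) * (if x = x0 then 1 else 0) + 0 * Pt x)
        = fun x => ((1 : ℝ) - 0) * (if x = x0 then 1 else 0) + 0 * Pt x := by norm_num
    rw [he]
    exact h0
  refine hmono.congr' (Eventually.of_forall fun μ => ?_) (Eventually.of_forall fun μ => sub_zero μ)
  simp only [smul_eq_mul, sub_zero, h0, h0two]
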